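/- Let G' = (V',E') be a symmetry-preserving extension of a peer-to-peer network G = (V,E) with partition {S_v}_{v∈V}, let K = |V'|, and let H be the graph obtained from G' by adding, for each v ∈ V, K fresh vertices I_v = {i_{v,1}, …, i_{v,K}} together with the edges E_v = {(v, i_{v,1})} ∪ ⋃_{k=1}^{K−1} {(i_{v,k}, i_{v,k+1}), (i_{v,k+1}, v)} ∪ ⋃_{w ∈ S_v} {(i_{v,K}, w)}; that is, H = (V' ∪ ⋃_{v∈V} I_v, E' ∪ ⋃_{v∈V} E_v). If σ is a non-trivial well-balanced automorphism of G' with σ(V) = V and σ(S_v) = S_{σ(v)} for all v ∈ V, then the map τ defined by τ(u) = σ(u) for u ∈ V' and τ(i_{v,k}) = i_{σ(v),k} for all v ∈ V and 1 ≤ k ≤ K is a non-trivial well-balanced automorphism of H. In particular, wamoti(H) ≠ ∅. -/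

import Mathlib

/-- An automorphism of a communication graph with edge relation `E`:
a permutation `σ` such that `(v,w) ∈ E` implies `(σ v, σ w) ∈ E`. -/
def IsAuto {α : Type*} (E : α → α → Prop) (σ : Equiv.Perm α) : Prop :=
  ∀ v w, E v w → E (σ v) (σ w)

/-- The orbit of `v` under the permutation `σ`: `{σ^p v | p ≥ 0}`. -/
def orbitOf {α : Type*} (σ : Equiv.Perm α) (v : α) : Set α :=
  {w | ∃ p : ℕ, (σ ^ p) v = w}

/-- A permutation is well-balanced if the orbits of all elements have the same cardinality. -/
def WellBalanced {α : Type*} (σ : Equiv.Perm α) : Prop :=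
  ∀ v w, (orbitOf σ v).ncard = (orbitOf σ w).ncard

/-- A peer-to-peer network: a finite directed graph without self-loops, with at least
two vertices, strongly connected, directly connected, and admitting a non-trivial
well-balanced automorphism (i.e. one of period `orderOf σ > 1`). -/
structure IsP2P {α : Type*} [Fintype α] (E : α → α → Prop) : Prop where
  irrefl : ∀ v, ¬ E v v
  two_le : 2 ≤ Fintype.card α
  strong : ∀ a b : α, Relation.ReflTransGen E a b
  direct : ∀ a b : α, a ≠ b → E a b ∨ E b a
  wamoti : ∃ σ : Equiv.Perm α, IsAuto E σ ∧ WellBalanced σ ∧ 1 < orderOf σ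

/-- `G' = (β, E')` is a symmetry-preserving extension of the peer-to-peer network
`G = (α, E)`, where `f : α → β` is the inclusion of the original vertices and
`S v` is the block of `v ∈ α` in the partition of the extension's vertices. -/
structure IsSPE {α β : Type*} [Fintype α] [Fintype β] (E : α → α → Prop)
    (E' : β → β → Prop) (f : α → β) (S : α → Set β) : Prop where
  irrefl : ∀ b, ¬ E' b b
  f_inj : Function.Injective f
  partition : ∀ b : β, ∃! v : α, b ∈ S v
  mem_f : ∀ v, f v ∈ S v
  strong : ∀ v : α, ∀ b ∈ S v, b ≠ f v →
    Relation.ReflTransGen E' (f v) b ∧ Relation.ReflTransGen E' b (f v)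
  edges : ∀ v w : α, v ≠ w → ((∃ a ∈ S v, ∃ b ∈ S w, E' a b) ↔ E v w)
  lift : ∀ σ : Equiv.Perm α, IsAuto E σ →
    ∃ ι : Equiv.Perm β, IsAuto E' ι ∧ (∀ v, ι (f v) = f (σ v)) ∧
      (∀ v, ι '' S v = S (σ v))

/-- The edge relation of the graph `H` obtained from the extension `G' = (β, E')` by
adding, for each `v ∈ α`, `K = |β|` fresh vertices `i_{v,1}, …, i_{v,K}` (encoded as
`Sum.inr (v, k)` with `k : Fin K` zero-based, so `Sum.inr (v, k)` is `i_{v,k+1}`) and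
the edges `(v, i_{v,1})`, `(i_{v,k}, i_{v,k+1})` and `(i_{v,k+1}, v)` for
`1 ≤ k ≤ K-1`, and `(i_{v,K}, w)` for `w ∈ S v`. -/
def HAdj {α β : Type*} [Fintype β] (E' : β → β → Prop) (f : α → β) (S : α → Set β) :
    β ⊕ α × Fin (Fintype.card β) → β ⊕ α × Fin (Fintype.card β) → Prop :=
  fun x y =>
    match x, y with
    | Sum.inl a, Sum.inl b => E' a b
    | Sum.inl a, Sum.inr (v, k) => a = f v ∧ (k : ℕ) = 0
    | Sum.inr (v, k), Sum.inl b =>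
        (1 ≤ (k : ℕ) ∧ b = f v) ∨ ((k : ℕ) = Fintype.card β - 1 ∧ b ∈ S v)
    | Sum.inr (v, k), Sum.inr (w, l) => v = w ∧ (l : ℕ) = (k : ℕ) + 1

/-- If `σ` is a non-trivial well-balanced automorphism of `G'` with `σ(V) = V`
(witnessed by the induced permutation `g` of `α` with `σ ∘ f = f ∘ g`) and
`σ(S v) = S (σ v)` for all `v ∈ V`, then the map `τ` acting as `σ` on `V'` and
sending `i_{v,k}` to `i_{σ(v),k}` is a non-trivial well-balanced automorphism of `H`;
in particular `wamoti(H) ≠ ∅`. -/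
theorem extended_auto_nontrivial_wellBalanced {α β : Type*} [Fintype α] [Fintype β]
    {E : α → α → Prop} {E' : β → β → Prop} {f : α → β} {S : α → Set β}
    (hG : IsP2P E) (hext : IsSPE E E' f S)
    (σ : Equiv.Perm β) (g : Equiv.Perm α)
    (hauto : IsAuto E' σ) (hwb : WellBalanced σ) (hnt : 1 < orderOf σ)
    (hfg : ∀ v, σ (f v) = f (g v)) (hS : ∀ v, σ '' S v = S (g v)) :
    IsAuto (HAdj E' f S)
        (Equiv.sumCongr σ (Equiv.prodCongr g (Equiv.refl (Fin (Fintype.card β))))) ∧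
      WellBalanced
        (Equiv.sumCongr σ (Equiv.prodCongr g (Equiv.refl (Fin (Fintype.card β))))) ∧
      1 < orderOf
        (Equiv.sumCongr σ (Equiv.prodCongr g (Equiv.refl (Fin (Fintype.card β))))) := by

  set τ := Equiv.sumCongr σ (Equiv.prodCongr g (Equiv.refl (Fin (Fintype.card β)))) with hτ
  have hfgp : ∀ (p : ℕ) (v : α), (σ ^ p) (f v) = f ((g ^ p) v) := by
    intro p
    induction p with
    | zero => simp
    | succ n ih =>
      intro v
      rw [pow_succ', pow_succ']
      simp only [Equiv.Perm.mul_apply, ih, hfg]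
  have hinl : ∀ (p : ℕ) (b : β), (τ ^ p) (Sum.inl b) = Sum.inl ((σ ^ p) b) := by
    intro p
    induction p with
    | zero => simp
    | succ n ih =>
      intro b
      rw [pow_succ', pow_succ']
      simp only [Equiv.Perm.mul_apply, ih]; simp only [hτ, Equiv.sumCongr_apply, Sum.map_inl]
  have hinr : ∀ (p : ℕ) (v : α) (k : Fin (Fintype.card β)),
      (τ ^ p) (Sum.inr (v, k)) = Sum.inr ((g ^ p) v, k) := by
    intro p
    induction p with
    | zero => simp
    | succ n ih =>
      intro v k
      rw [pow_succ', pow_succ']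
      simp only [Equiv.Perm.mul_apply, ih]; simp only [hτ, Equiv.sumCongr_apply, Sum.map_inr,
        Equiv.prodCongr_apply, Prod.map_apply, Equiv.refl_apply]
  refine ⟨?_, ?_, ?_⟩
  · rintro (a | ⟨v, k⟩) (b | ⟨w, l⟩) h
    · exact hauto _ _ h
    · obtain ⟨rfl, hk⟩ := h
      exact ⟨(hfg w).symm ▸ rfl, hk⟩
    · rcases h with ⟨hk, rfl⟩ | ⟨hk, hb⟩
      · exact Or.inl ⟨hk, hfg v⟩
      · exact Or.inr ⟨hk, (hS v) ▸ ⟨b, hb, rfl⟩⟩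
    · obtain ⟨rfl, hl⟩ := h
      exact ⟨rfl, hl⟩
  · -- WellBalanced
    have horb_inl : ∀ b : β, orbitOf τ (Sum.inl b) = Sum.inl '' orbitOf σ b := by
      intro b
      ext x
      constructor
      · rintro ⟨p, rfl⟩
        exact ⟨(σ ^ p) b, ⟨p, rfl⟩, (hinl p b).symm⟩
      · rintro ⟨y, ⟨p, rfl⟩, rfl⟩
        exact ⟨p, hinl p b⟩
    have horb_inr : ∀ (v : α) (k : Fin (Fintype.card β)),
        orbitOf τ (Sum.inr (v, k)) = (fun w => Sum.inr (w, k)) '' orbitOf g v := by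
      intro v k
      ext x
      constructor
      · rintro ⟨p, rfl⟩
        exact ⟨(g ^ p) v, ⟨p, rfl⟩, (hinr p v k).symm⟩
      · rintro ⟨y, ⟨p, rfl⟩, rfl⟩
        exact ⟨p, hinr p v k⟩
    have horb_g : ∀ v : α, orbitOf σ (f v) = f '' orbitOf g v := by
      intro v
      ext x
      constructor
      · rintro ⟨p, rfl⟩
        exact ⟨(g ^ p) v, ⟨p, rfl⟩, (hfgp p v).symm⟩
      · rintro ⟨y, ⟨p, rfl⟩, rfl⟩
        exact ⟨p, hfgp p v⟩
    have hcard : ∀ x : β ⊕ α × Fin (Fintype.card β),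
        ∃ b : β, (orbitOf τ x).ncard = (orbitOf σ b).ncard := by
      rintro (b | ⟨v, k⟩)
      · exact ⟨b, by rw [horb_inl, Set.ncard_image_of_injective _ Sum.inl_injective]⟩
      · refine ⟨f v, ?_⟩
        have hik : Function.Injective (fun w : α => (Sum.inr (w, k) : β ⊕ α × Fin (Fintype.card β))) := by
          intro a b hab
          simpa using hab
        rw [horb_inr, Set.ncard_image_of_injective _ hik, horb_g,
          Set.ncard_image_of_injective _ hext.f_inj]
    intro x y
    obtain ⟨b, hb⟩ := hcard x
    obtain ⟨c, hc⟩ := hcard y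
    rw [hb, hc, hwb b c]
  · -- nontrivial
    have hσ1 : σ ≠ 1 := by
      intro h
      rw [h, orderOf_one] at hnt
      exact lt_irrefl 1 hnt
    have hτ1 : τ ≠ 1 := by
      intro h
      apply hσ1
      ext b
      have := congrFun (congrArg (fun e : Equiv.Perm _ => (e : _ → _)) h) (Sum.inl b)
      simpa [hτ] using this
    have := orderOf_pos τ
    rcases Nat.lt_or_ge 1 (orderOf τ) with h1 | h1
    · exact h1
    · exfalso
      apply hτ1
      have : orderOf τ = 1 := le_antisymm h1 this
      exact orderOf_eq_one_iff.mp this
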